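/- Let R_1 and R_2 be commutative rings, each equipped with a computable encoding (a Primcodable structure) under which equality, addition, and multiplication are computable, with R_2 an integral domain whose fraction field is not algebraically closed. Let ι : R_1 → R_2 be a computable injective ring homomorphism whose range is a decidable (computable) subset of R_2 and is Diophantine over R_2 (as a subset of R_2), and suppose R_2 is generated as an R_1-module by elements ω_1,…,ω_r ∈ R_2. Assume that every computably enumerable subset of R_1^k is Diophantine over R_1 for every k. Then every computably enumerable subset of R_2 is Diophantine over R_2. -/

import Mathlib

universe v

/-- A subset `S ⊆ R^ι` is Diophantine over `R` if it is cut out by a single polynomial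
with coefficients in `R` using finitely many existential quantifiers over `R`. -/
def IsDiophantine {R : Type*} [CommRing R] {ι : Type*} (S : Set (ι → R)) : Prop :=
  ∃ (m : ℕ) (f : MvPolynomial (ι ⊕ Fin m) R),
    S = {a | ∃ y : Fin m → R, MvPolynomial.eval (Sum.elim a y) f = 0}

/-- A subset `S ⊆ R` is Diophantine over `R` (one-variable version). -/
def IsDiophantineSet {R : Type*} [CommRing R] (S : Set R) : Prop :=
  IsDiophantine {a : Fin 1 → R | a 0 ∈ S}

open MvPolynomial in
theorem exists_pairing_poly (R : Type) [CommRing R] [IsDomain R] (K : Type v) [Field K]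
    [Algebra R K] [IsFractionRing R K] (hK : ¬IsAlgClosed K) :
    ∃ h : MvPolynomial (Fin 2) R, ∀ u w : R,
      MvPolynomial.eval ![u, w] h = 0 ↔ u = 0 ∧ w = 0 := by
  have hex : ¬ ∀ p : Polynomial K, p.Monic → Irreducible p → ∃ x, p.eval x = 0 :=
    fun H => hK (IsAlgClosed.of_exists_root K H)
  push_neg at hex
  obtain ⟨p, hmon, hirr, hroot⟩ := hex
  set d := p.natDegree with hd
  have hd1 : d ≠ 0 := fun h0 => hirr.not_isUnit (by
    rw [hmon.natDegree_eq_zero.mp h0]; exact isUnit_one)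
  set q := IsLocalization.integerNormalization (nonZeroDivisors R) p with hq
  obtain ⟨b, hb⟩ := IsLocalization.integerNormalization_spec (nonZeroDivisors R) p
  set φ := algebraMap R K with hφ
  have hφinj : Function.Injective φ := IsFractionRing.injective R K
  have hbne : φ b ≠ 0 := by
    have : (b : R) ≠ 0 := nonZeroDivisors.ne_zero hb.1
    exact fun h => this (hφinj (by simpa using h))
  have hbcoeff : ∀ i, φ (q.coeff i) = φ b * p.coeff i := by
    intro i; have := congrArg (fun P => Polynomial.coeff P i) hb.2
    simpa [Polynomial.coeff_map, Polynomial.coeff_smul, Algebra.smul_def, hq, hφ] using this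
  refine ⟨∑ i ∈ Finset.range (d + 1), C (q.coeff i) * X 0 ^ i * X 1 ^ (d - i), ?_⟩
  intro u w
  have heval : (MvPolynomial.eval ![u, w])
        (∑ i ∈ Finset.range (d + 1), C (q.coeff i) * X 0 ^ i * X 1 ^ (d - i))
      = ∑ i ∈ Finset.range (d + 1), q.coeff i * u ^ i * w ^ (d - i) := by
    rw [map_sum]; congr 1; funext i; simp
  rw [heval]
  constructor
  · intro hsum
    have hw : w = 0 := by
      by_contra hw
      have hwK : φ w ≠ 0 := fun h => hw (hφinj (by simpa using h))
      have hKsum : ∑ i ∈ Finset.range (d + 1), p.coeff i * φ u ^ i * φ w ^ (d - i) = 0 := by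
        have := congrArg φ hsum
        rw [map_sum, map_zero] at this
        simp only [map_mul, map_pow, hbcoeff] at this
        have h2 : φ b * ∑ i ∈ Finset.range (d + 1),
            p.coeff i * φ u ^ i * φ w ^ (d - i) = 0 := by
          rw [Finset.mul_sum, ← this]; congr 1; funext i; ring
        rcases mul_eq_zero.mp h2 with h | h
        · exact absurd h hbne
        · exact h
      have hpe : p.eval (φ u / φ w) * φ w ^ d
          = ∑ i ∈ Finset.range (d + 1), p.coeff i * φ u ^ i * φ w ^ (d - i) := by
        rw [Polynomial.eval_eq_sum_range, Finset.sum_mul]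
        refine Finset.sum_congr rfl fun i hi => ?_
        have hid : i ≤ d := Nat.lt_succ_iff.mp (Finset.mem_range.mp hi)
        rw [pow_sub₀ _ hwK hid]
        field_simp
        rw [div_pow, mul_assoc, div_mul_cancel₀ _ (pow_ne_zero _ hwK)]
      have : p.eval (φ u / φ w) = 0 := by
        have h3 := hpe.trans hKsum
        rcases mul_eq_zero.mp h3 with h | h
        · exact h
        · exact absurd h (pow_ne_zero _ hwK)
      exact hroot _ this
    subst hw
    have hsum' : q.coeff d * u ^ d = 0 := by
      rw [← hsum]
      rw [Finset.sum_eq_single d]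
      · simp
      · intro i hi hne
        have : d - i ≠ 0 := by
          have := Nat.lt_succ_iff.mp (Finset.mem_range.mp hi)
          omega
        rw [zero_pow this, mul_zero]
      · intro h; exact absurd (Finset.self_mem_range_succ d) h
    have hqd : q.coeff d ≠ 0 := by
      intro h
      have := hbcoeff d
      rw [h, map_zero, hmon.coeff_natDegree, mul_one] at this
      exact hbne this.symm
    have : u ^ d = 0 := by
      rcases mul_eq_zero.mp hsum' with h | h
      · exact absurd h hqd
      · exact h
    refine ⟨pow_eq_zero_iff hd1 |>.mp this, rfl⟩
  · rintro ⟨rfl, rfl⟩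
    refine Finset.sum_eq_zero fun i hi => ?_
    rcases eq_or_ne i 0 with rfl | h0
    · rw [zero_pow (by omega : d - 0 ≠ 0)]; ring
    · rw [zero_pow h0]; ring

noncomputable def combineL {R : Type} [CommRing R] {σ : Type} (h : MvPolynomial (Fin 2) R) :
    List (MvPolynomial σ R) → MvPolynomial σ R
  | [] => 0
  | f :: l => MvPolynomial.aeval ![f, combineL h l] h

theorem eval_aeval' {R : Type} [CommRing R] {σ : Type} (v : σ → R)
    (g : Fin 2 → MvPolynomial σ R) (h : MvPolynomial (Fin 2) R) :
    MvPolynomial.eval v (MvPolynomial.aeval g h)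
      = MvPolynomial.eval (fun i => MvPolynomial.eval v (g i)) h := by
  rw [MvPolynomial.aeval_def, MvPolynomial.eval₂_comp_left (MvPolynomial.eval v)]
  have hC : (MvPolynomial.eval v).comp MvPolynomial.C = RingHom.id R := by
    ext x; simp
  rw [MvPolynomial.algebraMap_eq, hC]
  rfl

theorem combineL_eval {R : Type} [CommRing R] {σ : Type} {h : MvPolynomial (Fin 2) R}
    (hh : ∀ u w : R, MvPolynomial.eval ![u, w] h = 0 ↔ u = 0 ∧ w = 0) (v : σ → R) :
    ∀ l : List (MvPolynomial σ R),
      MvPolynomial.eval v (combineL h l) = 0 ↔ ∀ f ∈ l, MvPolynomial.eval v f = 0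
  | [] => by simp [combineL]
  | f :: l => by
    have key : MvPolynomial.eval v (combineL h (f :: l))
        = MvPolynomial.eval ![MvPolynomial.eval v f, MvPolynomial.eval v (combineL h l)] h := by
      rw [show combineL h (f :: l) = MvPolynomial.aeval ![f, combineL h l] h from rfl,
        eval_aeval']
      have : (fun i => MvPolynomial.eval v (![f, combineL h l] i))
          = ![MvPolynomial.eval v f, MvPolynomial.eval v (combineL h l)] := by
        funext i; fin_cases i <;> simp
      rw [this]
    rw [key, hh, combineL_eval hh v l]
    simp

theorem isDiophantine_of_fintype {R : Type} [CommRing R] {ι : Type} (S : Set (ι → R))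
    (τ : Type) [Fintype τ] (f : MvPolynomial (ι ⊕ τ) R)
    (hS : ∀ a : ι → R, a ∈ S ↔ ∃ y : τ → R, MvPolynomial.eval (Sum.elim a y) f = 0) :
    IsDiophantine S := by
  classical
  let e : τ ≃ Fin (Fintype.card τ) := Fintype.equivFin τ
  refine ⟨Fintype.card τ, MvPolynomial.rename (Sum.map id e) f, ?_⟩
  ext a
  rw [Set.mem_setOf_eq, hS a]
  constructor
  · rintro ⟨y, hy⟩
    refine ⟨y ∘ e.symm, ?_⟩
    rw [MvPolynomial.eval_rename]
    have : Sum.elim a (y ∘ e.symm) ∘ Sum.map id e = Sum.elim a y := by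
      funext s; cases s <;> simp
    rw [this, hy]
  · rintro ⟨y, hy⟩
    refine ⟨y ∘ e, ?_⟩
    rw [MvPolynomial.eval_rename] at hy
    have : Sum.elim a y ∘ Sum.map id e = Sum.elim a (y ∘ e) := by
      funext s; cases s <;> simp
    rwa [this] at hy

theorem computable_finsum {α R₂ : Type} [Primcodable α] [Primcodable R₂] [CommRing R₂]
    (hadd : Computable fun p : R₂ × R₂ => p.1 + p.2) :
    ∀ {n : ℕ} (f : Fin n → α → R₂), (∀ i, Computable (f i)) →
      Computable fun a => ∑ i, f i a := by
  intro n
  induction n with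
  | zero =>
    intro f hf
    exact (Computable.const (0 : R₂)).of_eq (by simp)
  | succ n ih =>
    intro f hf
    have h2 : Computable₂ fun x y : R₂ => x + y := hadd
    exact (h2.comp (hf 0) (ih (fun i => f i.succ) (fun i => hf i.succ))).of_eq
      fun a => (Fin.sum_univ_succ (fun i => f i a)).symm

theorem hom_eval_mv {R₁ R₂ : Type} [CommRing R₁] [CommRing R₂] {σ : Type}
    (ι : R₁ →+* R₂) (u : σ → R₁) (f : MvPolynomial σ R₁) :
    MvPolynomial.eval (fun s => ι (u s)) (MvPolynomial.map ι f)
      = ι (MvPolynomial.eval u f) := by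
  rw [MvPolynomial.eval_map]
  rw [show (MvPolynomial.eval u) f = MvPolynomial.eval₂ (RingHom.id R₁) u f from rfl]
  rw [MvPolynomial.eval₂_comp_left ι]
  simp [Function.comp_def]

theorem listable_isDiophantine_of_extension
    (R₁ : Type) [CommRing R₁] [Primcodable R₁]
    (R₂ : Type) [CommRing R₂] [IsDomain R₂] [Primcodable R₂]
    (K : Type v) [Field K] [Algebra R₂ K] [IsFractionRing R₂ K]
    (hK : ¬IsAlgClosed K)
    (heq₁ : ComputablePred fun p : R₁ × R₁ => p.1 = p.2)
    (hadd₁ : Computable fun p : R₁ × R₁ => p.1 + p.2)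
    (hmul₁ : Computable fun p : R₁ × R₁ => p.1 * p.2)
    (heq₂ : ComputablePred fun p : R₂ × R₂ => p.1 = p.2)
    (hadd₂ : Computable fun p : R₂ × R₂ => p.1 + p.2)
    (hmul₂ : Computable fun p : R₂ × R₂ => p.1 * p.2)
    (ι : R₁ →+* R₂) (hιcomp : Computable fun x : R₁ => ι x)
    (hιinj : Function.Injective ι)
    (hrange : ComputablePred fun x : R₂ => x ∈ Set.range ι)
    (hrangeDio : IsDiophantineSet (Set.range ι))
    (r : ℕ) (ω : Fin r → R₂)
    (hgen : ∀ x : R₂, ∃ a : Fin r → R₁, x = ∑ i, ι (a i) * ω i)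
    (hdio : ∀ (k : ℕ) (S : Set (Fin k → R₁)), REPred (· ∈ S) → IsDiophantine S)
    (A : Set R₂) (hA : REPred (· ∈ A)) :
    IsDiophantineSet A := by
  classical
  obtain ⟨h, hh⟩ := exists_pairing_poly R₂ K hK
  -- the map (a : R₁^r) ↦ ∑ ι(a i) ω i is computable
  have hφ : Computable (fun a : Fin r → R₁ => ∑ i, ι (a i) * ω i) := by
    refine computable_finsum hadd₂ _ fun i => ?_
    have h2 : Computable₂ fun x y : R₂ => x * y := hmul₂
    exact h2.comp (hιcomp.comp (Computable.fin_app.comp Computable.id (Computable.const i)))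
      (Computable.const (ω i))
  set Φ : (Fin r → R₁) → R₂ := fun a => ∑ i, ι (a i) * ω i with hΦdef
  have hSre : REPred (· ∈ {a : Fin r → R₁ | Φ a ∈ A}) := Partrec.comp hA hφ
  obtain ⟨m, f, hf⟩ := hdio r _ hSre
  have hfIff : ∀ a : Fin r → R₁, Φ a ∈ A ↔
      ∃ y : Fin m → R₁, MvPolynomial.eval (Sum.elim a y) f = 0 :=
    fun a => Set.ext_iff.mp hf a
  obtain ⟨m₀, g, hg⟩ := hrangeDio
  have hgIff : ∀ c : Fin 1 → R₂, c 0 ∈ Set.range ι ↔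
      ∃ z : Fin m₀ → R₂, MvPolynomial.eval (Sum.elim c z) g = 0 :=
    fun c => Set.ext_iff.mp hg c
  -- variable bookkeeping
  let τ : Type := Fin (r + m) ⊕ (Fin (r + m) × Fin m₀)
  let V : Type := Fin 1 ⊕ τ
  let wv : Fin (r + m) → MvPolynomial V R₂ := fun j => MvPolynomial.X (Sum.inr (Sum.inl j))
  let P0 : MvPolynomial V R₂ :=
    MvPolynomial.X (Sum.inl 0) - ∑ i : Fin r, wv (Fin.castAdd m i) * MvPolynomial.C (ω i)
  let σf : Fin r ⊕ Fin m → V := Sum.elim (fun i => Sum.inr (Sum.inl (Fin.castAdd m i)))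
    (fun j => Sum.inr (Sum.inl (Fin.natAdd r j)))
  let f' : MvPolynomial V R₂ := MvPolynomial.rename σf (MvPolynomial.map (ι : R₁ →+* R₂) f)
  let σg : Fin (r + m) → (Fin 1 ⊕ Fin m₀) → V := fun j =>
    Sum.elim (fun _ => Sum.inr (Sum.inl j)) (fun t => Sum.inr (Sum.inr (j, t)))
  let G : Fin (r + m) → MvPolynomial V R₂ := fun j => MvPolynomial.rename (σg j) g
  let F : MvPolynomial V R₂ := combineL h (P0 :: f' :: List.ofFn G)
  show IsDiophantine {a : Fin 1 → R₂ | a 0 ∈ A}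
  refine isDiophantine_of_fintype _ τ F fun a => ?_
  rw [Set.mem_setOf_eq]
  constructor
  · -- a 0 ∈ A → witnesses exist
    intro ha
    obtain ⟨c, hc⟩ := hgen (a 0)
    have hcA : Φ c ∈ A := by
      have : Φ c = a 0 := hc.symm
      rwa [this]
    obtain ⟨yy, hyy⟩ := (hfIff c).mp hcA
    set cc : Fin (r + m) → R₁ := Fin.addCases c yy with hccdef
    set w : Fin (r + m) → R₂ := fun j => ι (cc j) with hwdef
    have hz : ∀ j, ∃ z : Fin m₀ → R₂,
        MvPolynomial.eval (Sum.elim (fun _ : Fin 1 => w j) z) g = 0 :=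
      fun j => (hgIff (fun _ => w j)).mp ⟨cc j, rfl⟩
    choose z hzz using hz
    refine ⟨Sum.elim w (fun p => z p.1 p.2), ?_⟩
    rw [show F = combineL h (P0 :: f' :: List.ofFn G) from rfl, combineL_eval hh]
    intro q hq
    simp only [List.mem_cons, List.mem_ofFn] at hq
    set v : V → R₂ := Sum.elim a (Sum.elim w (fun p => z p.1 p.2)) with hvdef
    rcases hq with rfl | rfl | hq
    · -- P0
      have hev : MvPolynomial.eval v P0 = a 0 - ∑ i, ι (c i) * ω i := by
        simp only [P0, wv, map_sub, MvPolynomial.eval_X, map_sum, MvPolynomial.eval_mul,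
          MvPolynomial.eval_C, hvdef, Sum.elim_inl, Sum.elim_inr]
        congr 1
        refine Finset.sum_congr rfl fun i _ => ?_
        rw [hwdef]
        simp only [hccdef]
        rw [Fin.addCases_left]
      rw [hev, ← hc, sub_self]
    · -- f'
      rw [show f' = MvPolynomial.rename σf (MvPolynomial.map (ι : R₁ →+* R₂) f) from rfl,
        MvPolynomial.eval_rename]
      have heq : v ∘ σf = fun s => ι (Sum.elim c yy s) := by
        funext s
        cases s with
        | inl i =>
          simp only [Function.comp_apply, σf, Sum.elim_inl, hvdef, Sum.elim_inr, hwdef, hccdef]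
          rw [Fin.addCases_left]
        | inr j =>
          simp only [Function.comp_apply, σf, Sum.elim_inr, hvdef, hwdef, hccdef, Sum.elim_inl]
          rw [Fin.addCases_right]
      rw [heq, hom_eval_mv, hyy, map_zero]
    · -- G j
      obtain ⟨j, rfl⟩ := hq
      rw [show G j = MvPolynomial.rename (σg j) g from rfl, MvPolynomial.eval_rename]
      have heq : v ∘ σg j = Sum.elim (fun _ : Fin 1 => w j) (z j) := by
        funext s
        cases s with
        | inl t => simp [σg, hvdef]
        | inr t => simp [σg, hvdef]
      rw [heq]
      exact hzz j
  · -- witnesses exist → a 0 ∈ A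
    rintro ⟨y, hy⟩
    rw [show F = combineL h (P0 :: f' :: List.ofFn G) from rfl, combineL_eval hh] at hy
    set v : V → R₂ := Sum.elim a y with hvdef
    have hwj : ∀ j : Fin (r + m), ∃ x : R₁, ι x = y (Sum.inl j) := by
      intro j
      have hGj := hy (G j) (List.mem_cons_of_mem _ (List.mem_cons_of_mem _
        (List.mem_ofFn.mpr ⟨j, rfl⟩)))
      rw [show G j = MvPolynomial.rename (σg j) g from rfl, MvPolynomial.eval_rename] at hGj
      have heq : v ∘ σg j
          = Sum.elim (fun _ : Fin 1 => y (Sum.inl j)) (fun t => y (Sum.inr (j, t))) := by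
        funext s
        cases s with
        | inl t => simp [σg, hvdef]
        | inr t => simp [σg, hvdef]
      rw [heq] at hGj
      exact (hgIff (fun _ => y (Sum.inl j))).mpr ⟨_, hGj⟩
    choose c hc using hwj
    have hf0 := hy f' (List.mem_cons_of_mem _ List.mem_cons_self)
    rw [show f' = MvPolynomial.rename σf (MvPolynomial.map (ι : R₁ →+* R₂) f) from rfl,
      MvPolynomial.eval_rename] at hf0
    have heq : v ∘ σf
        = fun s => ι (Sum.elim (fun i => c (Fin.castAdd m i)) (fun j => c (Fin.natAdd r j)) s) := by
      funext s
      cases s with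
      | inl i => simp [σf, hvdef, hc]
      | inr j => simp [σf, hvdef, hc]
    rw [heq, hom_eval_mv] at hf0
    have hf0' : MvPolynomial.eval
        (Sum.elim (fun i => c (Fin.castAdd m i)) (fun j => c (Fin.natAdd r j))) f = 0 := by
      apply hιinj
      rw [hf0, map_zero]
    have hmem : Φ (fun i => c (Fin.castAdd m i)) ∈ A := (hfIff _).mpr ⟨_, hf0'⟩
    have hP0 := hy P0 List.mem_cons_self
    have hev : MvPolynomial.eval v P0 = a 0 - ∑ i, ι (c (Fin.castAdd m i)) * ω i := by
      simp only [P0, wv, map_sub, MvPolynomial.eval_X, map_sum, MvPolynomial.eval_mul,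
        MvPolynomial.eval_C, hvdef, Sum.elim_inl, Sum.elim_inr]
      congr 1
      refine Finset.sum_congr rfl fun i _ => ?_
      rw [hc]
    rw [hev, sub_eq_zero] at hP0
    have : a 0 = Φ (fun i => c (Fin.castAdd m i)) := hP0
    rwa [this]
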